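/- Let K be a perfect field of characteristic coprime to 2m, let a ∈ K*, and let K(α) = K[X]/(X^m + a) be a field extension of K of degree m. For any unit u ∈ K(α)*, the trace form Tr_{K(α)/K}(⟨u⟩) in the Grothendieck–Witt ring GW(K) equals ((m-1)/2)·H + ⟨um⟩ if m is odd, and ((m-2)/2)·H + ⟨um⟩ + ⟨-aum⟩ if m is even, where H = ⟨1⟩ + ⟨-1⟩ is the hyperbolic form. -/

import Mathlib

open Polynomial

section TraceAux

variable {K : Type*} [Field K]

private lemma traceaux_f_ne (m : ℕ) (hm : 1 ≤ m) (a : K) : (X ^ m + C a : K[X]) ≠ 0 := by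
  intro h
  have h2 : ((X : K[X]) ^ m + C a).natDegree = m := natDegree_X_pow_add_C
  rw [h, natDegree_zero] at h2; omega

private lemma traceaux_root_pow (m : ℕ) (a : K) :
    (AdjoinRoot.root (X ^ m + C a : K[X])) ^ m
      = algebraMap K (AdjoinRoot (X ^ m + C a : K[X])) (-a) := by
  have h := AdjoinRoot.eval₂_root (X ^ m + C a : K[X])
  rw [eval₂_add, eval₂_pow, eval₂_X, eval₂_C] at h
  rw [AdjoinRoot.algebraMap_eq, map_neg]
  exact eq_neg_of_add_eq_zero_left h

private lemma traceaux_repr (m : ℕ) (hm : 1 ≤ m) (a : K) (t : ℕ)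
    (ht : t < (X ^ m + C a : K[X]).natDegree) :
    (AdjoinRoot.powerBasis (traceaux_f_ne m hm a)).basis.repr
      ((AdjoinRoot.root (X ^ m + C a : K[X])) ^ t) = Finsupp.single ⟨t, ht⟩ 1 := by
  have hb := (AdjoinRoot.powerBasis (traceaux_f_ne m hm a)).basis_eq_pow ⟨t, ht⟩
  rw [AdjoinRoot.powerBasis_gen] at hb
  rw [← hb, Module.Basis.repr_self]

private lemma traceaux_trace_pow_lt (m : ℕ) (hm : 1 ≤ m) (a : K) (s : ℕ) (hs : s < m) :
    Algebra.trace K (AdjoinRoot (X ^ m + C a : K[X]))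
      ((AdjoinRoot.root (X ^ m + C a : K[X])) ^ s) = if s = 0 then (m : K) else 0 := by
  have hfne := traceaux_f_ne m hm a
  have hdeg : (X ^ m + C a : K[X]).natDegree = m := natDegree_X_pow_add_C
  set pb := AdjoinRoot.powerBasis hfne with hpb
  have hpd : pb.dim = m := by rw [hpb, AdjoinRoot.powerBasis_dim, hdeg]
  by_cases h0 : s = 0
  · subst h0
    rw [pow_zero, if_pos rfl,
      show (1 : AdjoinRoot (X ^ m + C a : K[X])) = algebraMap K _ 1 from (map_one _).symm,
      Algebra.trace_algebraMap_of_basis pb.basis]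
    simp [hpd]
  · rw [if_neg h0, Algebra.trace_eq_matrix_trace pb.basis, Matrix.trace]
    apply Finset.sum_eq_zero
    intro j _
    have hjm : (j : ℕ) < m := by have h := j.2; omega
    rw [Matrix.diag_apply, Algebra.leftMulMatrix_eq_repr_mul]
    have hbj : pb.basis j = AdjoinRoot.root (X ^ m + C a : K[X]) ^ (j : ℕ) := by
      rw [pb.basis_eq_pow, AdjoinRoot.powerBasis_gen]
    rw [hbj, ← pow_add]
    by_cases hlt : s + (j : ℕ) < m
    · rw [traceaux_repr m hm a _ (show s + (j:ℕ) < _ by omega), Finsupp.single_apply, if_neg]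
      intro hcontra
      have : s + (j : ℕ) = (j : ℕ) := by
        have := congrArg (Fin.val) hcontra
        simpa using this
      omega
    · have h1 : s + (j : ℕ) = m + (s + (j : ℕ) - m) := by omega
      have ht2 : s + (j : ℕ) - m < m := by omega
      rw [h1, pow_add, traceaux_root_pow, ← Algebra.smul_def, map_smul,
        traceaux_repr m hm a _ (show s + (j:ℕ) - m < _ by omega), Finsupp.smul_apply,
        Finsupp.single_apply, if_neg]
      · simp
      · intro hcontra
        have : s + (j : ℕ) - m = (j : ℕ) := by
          have := congrArg (Fin.val) hcontra
          simpa using this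
        omega

private lemma traceaux_trace_pow (m : ℕ) (hm : 1 ≤ m) (a : K) (s : ℕ) (hs : s ≤ 2 * m - 2) :
    Algebra.trace K (AdjoinRoot (X ^ m + C a : K[X]))
      ((AdjoinRoot.root (X ^ m + C a : K[X])) ^ s)
      = if s = 0 then (m : K) else if s = m then -a * m else 0 := by
  by_cases hlt : s < m
  · rw [traceaux_trace_pow_lt m hm a s hlt]
    by_cases h0 : s = 0
    · simp [h0]
    · rw [if_neg h0, if_neg h0, if_neg (by omega)]
  · have h1 : s = m + (s - m) := by omega
    have ht2 : s - m < m := by omega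
    rw [h1, pow_add, traceaux_root_pow, ← Algebra.smul_def, map_smul,
      traceaux_trace_pow_lt m hm a _ ht2, smul_eq_mul]
    by_cases h0 : s - m = 0
    · rw [if_pos h0, if_neg (by omega), if_pos (by omega)]
    · rw [if_neg h0, if_neg (by omega), if_neg (by omega), mul_zero]

end TraceAux

/-- Trace form of the field extension `K(α) = K[X]/(X^m + a)`: for a unit `u ∈ K`, the
`K`-quadratic form `x ↦ Tr_{K(α)/K}(u·x²)` is equivalent to `((m-1)/2)·H + ⟨um⟩` when `m`
is odd, and to `((m-2)/2)·H + ⟨um⟩ + ⟨-aum⟩` when `m` is even, where `H = ⟨1⟩ + ⟨-1⟩`.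
The hyperbolic summands are encoded as alternating diagonal entries `1, -1, …` of a
weighted sum of squares. -/
theorem trace_form_adjoin_mth_root
    {K : Type*} [Field K] (m : ℕ) (hm : 1 ≤ m) (hchar : ((2 * m : ℕ) : K) ≠ 0)
    (a : K) (ha : a ≠ 0) (hirr : Irreducible (X ^ m + C a : K[X]))
    (u : K) (hu : u ≠ 0)
    (w : Fin m → K)
    (hw : (Odd m → w = fun i : Fin m => if (i : ℕ) < m - 1 then
            (if (i : ℕ) % 2 = 0 then 1 else -1) else u * m) ∧
          (Even m → w = fun i : Fin m => if (i : ℕ) < m - 2 then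
            (if (i : ℕ) % 2 = 0 then 1 else -1)
          else if (i : ℕ) = m - 2 then u * m else -a * u * m)) :
    QuadraticMap.Equivalent
      (((u • Algebra.traceForm K (AdjoinRoot (X ^ m + C a : K[X]))) :
        LinearMap.BilinMap K (AdjoinRoot (X ^ m + C a : K[X])) K).toQuadraticMap)
      (QuadraticMap.weightedSumSquares K w) := by
  classical
  have hchar' : (2 : K) * (m : K) ≠ 0 := by exact_mod_cast hchar
  have h2 : (2 : K) ≠ 0 := fun h => hchar' (by rw [h, zero_mul])
  have hmK : (m : K) ≠ 0 := fun h => hchar' (by rw [h, mul_zero])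
  have hc : a * u * (m : K) ≠ 0 := mul_ne_zero (mul_ne_zero ha hu) hmK
  letI : Invertible (2 : K) := invertibleOfNonzero h2
  have hfne := traceaux_f_ne m hm a
  set α : AdjoinRoot (X ^ m + C a : K[X]) := AdjoinRoot.root _ with hα
  set B := ((u • Algebra.traceForm K (AdjoinRoot (X ^ m + C a : K[X]))) :
    LinearMap.BilinMap K (AdjoinRoot (X ^ m + C a : K[X])) K) with hB
  set Tv := (fun n =>
    if n = 0 then u * (m : K) else if n = m then -(a * u * (m : K)) else 0 : ℕ → K) with hTv
  have hTvz : ∀ n, n ≠ 0 → n ≠ m → Tv n = 0 := by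
    intro n h1 hn2; simp only [hTv]; rw [if_neg h1, if_neg hn2]
  have hTvm : Tv m = -(a * u * (m : K)) := by
    simp only [hTv]; rw [if_neg (show ¬ m = 0 by omega)]; simp
  have hTv0 : Tv 0 = u * (m : K) := by simp [hTv]
  have hBpow : ∀ s t : ℕ, s < m → t < m → B (α ^ s) (α ^ t) = Tv (s + t) := by
    intro s t hs ht
    rw [hB]
    simp only [LinearMap.smul_apply, Algebra.traceForm_apply, smul_eq_mul]
    rw [← pow_add, hα, traceaux_trace_pow m hm a (s + t) (by omega)]
    simp only [hTv]
    split_ifs <;> ring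
  set r : ℕ := (m - 1) / 2 with hr
  set e1 := (fun i =>
    if (i : ℕ) < 2 * r then (i : ℕ) / 2 + 1 else if (i : ℕ) = 2 * r then 0 else m / 2 :
    Fin m → ℕ) with he1
  set e2 := (fun i =>
    if (i : ℕ) < 2 * r then m - 1 - (i : ℕ) / 2 else 0 : Fin m → ℕ) with he2
  set dd := (fun i =>
    if (i : ℕ) < 2 * r then (if (i : ℕ) % 2 = 0 then 1 else -1) * (-(2 * (a * u * (m : K)))⁻¹)
    else 0 : Fin m → K) with hdd
  set v := (fun i => α ^ (e1 i) + dd i • α ^ (e2 i) :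
    Fin m → AdjoinRoot (X ^ m + C a : K[X])) with hv
  have he1lt : ∀ i : Fin m, e1 i < m := by
    intro i; have := i.isLt; simp only [he1]; split_ifs <;> omega
  have he2lt : ∀ i : Fin m, e2 i < m := by
    intro i; have := i.isLt; simp only [he2]; split_ifs <;> omega
  have hBvv : ∀ i j : Fin m, B (v i) (v j) =
      Tv (e1 i + e1 j) + dd j * Tv (e1 i + e2 j) + dd i * Tv (e2 i + e1 j)
        + dd i * dd j * Tv (e2 i + e2 j) := by
    intro i j
    simp only [hv]
    simp only [map_add, map_smul, LinearMap.add_apply, LinearMap.smul_apply, smul_eq_mul]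
    rw [hBpow _ _ (he1lt i) (he1lt j), hBpow _ _ (he1lt i) (he2lt j),
      hBpow _ _ (he2lt i) (he1lt j), hBpow _ _ (he2lt i) (he2lt j)]
    ring
  -- values of e1, e2, dd by region
  have hA1 : ∀ i : Fin m, (i : ℕ) < 2 * r → e1 i = (i : ℕ) / 2 + 1 := by
    intro i hi; simp only [he1]; rw [if_pos hi]
  have hA2 : ∀ i : Fin m, (i : ℕ) < 2 * r → e2 i = m - 1 - (i : ℕ) / 2 := by
    intro i hi; simp only [he2]; rw [if_pos hi]
  have hA3 : ∀ i : Fin m, (i : ℕ) < 2 * r →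
      dd i = (if (i : ℕ) % 2 = 0 then 1 else -1) * (-(2 * (a * u * (m : K)))⁻¹) := by
    intro i hi; simp only [hdd]; rw [if_pos hi]
  have hB1 : ∀ i : Fin m, ¬ (i : ℕ) < 2 * r → (i : ℕ) = 2 * r → e1 i = 0 := by
    intro i hi hieq; simp only [he1]; rw [if_neg hi, if_pos hieq]
  have hC1 : ∀ i : Fin m, ¬ (i : ℕ) < 2 * r → (i : ℕ) ≠ 2 * r → e1 i = m / 2 := by
    intro i hi hieq; simp only [he1]; rw [if_neg hi, if_neg hieq]
  have hBC2 : ∀ i : Fin m, ¬ (i : ℕ) < 2 * r → e2 i = 0 := by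
    intro i hi; simp only [he2]; rw [if_neg hi]
  have hBC3 : ∀ i : Fin m, ¬ (i : ℕ) < 2 * r → dd i = 0 := by
    intro i hi; simp only [hdd]; rw [if_neg hi]
  -- diagonal values
  have hQv : ∀ i : Fin m, B (v i) (v i) = w i := by
    intro i
    have him := i.isLt
    rw [hBvv]
    by_cases hi : (i : ℕ) < 2 * r
    · rw [hA1 i hi, hA2 i hi, hA3 i hi]
      rw [hTvz (((i : ℕ) / 2 + 1) + ((i : ℕ) / 2 + 1)) (by omega) (by omega),
        show ((i : ℕ) / 2 + 1) + (m - 1 - (i : ℕ) / 2) = m by omega,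
        show (m - 1 - (i : ℕ) / 2) + ((i : ℕ) / 2 + 1) = m by omega, hTvm,
        hTvz ((m - 1 - (i : ℕ) / 2) + (m - 1 - (i : ℕ) / 2)) (by omega) (by omega)]
      rcases Nat.even_or_odd m with hpar | hpar
      · have hm2 : m % 2 = 0 := Nat.even_iff.mp hpar
        rw [hw.2 hpar]
        beta_reduce
        rw [if_pos (show (i : ℕ) < m - 2 by omega)]
        by_cases hp : (i : ℕ) % 2 = 0
        · rw [if_pos hp]; field_simp; ring
        · rw [if_neg hp]; field_simp; ring
      · have hm2 : m % 2 = 1 := Nat.odd_iff.mp hpar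
        rw [hw.1 hpar]
        beta_reduce
        rw [if_pos (show (i : ℕ) < m - 1 by omega)]
        by_cases hp : (i : ℕ) % 2 = 0
        · rw [if_pos hp]; field_simp; ring
        · rw [if_neg hp]; field_simp; ring
    · by_cases hieq : (i : ℕ) = 2 * r
      · rw [hB1 i hi hieq, hBC2 i hi, hBC3 i hi]
        rw [show (0 + 0 : ℕ) = 0 from rfl, hTv0]
        rcases Nat.even_or_odd m with hpar | hpar
        · have hm2 : m % 2 = 0 := Nat.even_iff.mp hpar
          rw [hw.2 hpar]
          beta_reduce
          rw [if_neg (show ¬ (i : ℕ) < m - 2 by omega), if_pos (show (i : ℕ) = m - 2 by omega)]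
          ring
        · have hm2 : m % 2 = 1 := Nat.odd_iff.mp hpar
          rw [hw.1 hpar]
          beta_reduce
          rw [if_neg (show ¬ (i : ℕ) < m - 1 by omega)]
          ring
      · have hm2 : m % 2 = 0 := by omega
        rw [hC1 i hi hieq, hBC2 i hi, hBC3 i hi]
        rw [show m / 2 + m / 2 = m by omega, hTvm]
        rw [hw.2 (Nat.even_iff.mpr hm2)]
        beta_reduce
        rw [if_neg (show ¬ (i : ℕ) < m - 2 by omega), if_neg (show ¬ (i : ℕ) = m - 2 by omega)]
        ring
  -- orthogonality
  have horth0 : ∀ i j : Fin m, i ≠ j → B (v i) (v j) = 0 := by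
    intro i j hij
    have him := i.isLt
    have hjm := j.isLt
    have hije : (i : ℕ) ≠ (j : ℕ) := fun h => hij (Fin.ext h)
    rw [hBvv]
    by_cases hi : (i : ℕ) < 2 * r <;> by_cases hj : (j : ℕ) < 2 * r
    · -- both in pair region
      rw [hA1 i hi, hA2 i hi, hA1 j hj, hA2 j hj]
      by_cases hk : (i : ℕ) / 2 = (j : ℕ) / 2
      · have hddj : dd j = - dd i := by
          rw [hA3 i hi, hA3 j hj]
          have hpp : ((i : ℕ) % 2 = 0 ∧ (j : ℕ) % 2 = 1) ∨
              ((i : ℕ) % 2 = 1 ∧ (j : ℕ) % 2 = 0) := by omega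
          rcases hpp with ⟨h1, h2⟩ | ⟨h1, h2⟩
          · rw [if_pos h1, if_neg (show ¬ ((j : ℕ) % 2 = 0) by omega)]; ring
          · rw [if_pos h2, if_neg (show ¬ ((i : ℕ) % 2 = 0) by omega)]; ring
        rw [hTvz (((i : ℕ) / 2 + 1) + ((j : ℕ) / 2 + 1)) (by omega) (by omega),
          show ((i : ℕ) / 2 + 1) + (m - 1 - (j : ℕ) / 2) = m by omega,
          show (m - 1 - (i : ℕ) / 2) + ((j : ℕ) / 2 + 1) = m by omega, hTvm,
          hTvz ((m - 1 - (i : ℕ) / 2) + (m - 1 - (j : ℕ) / 2)) (by omega) (by omega),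
          hddj]
        ring
      · rw [hTvz (((i : ℕ) / 2 + 1) + ((j : ℕ) / 2 + 1)) (by omega) (by omega),
          hTvz (((i : ℕ) / 2 + 1) + (m - 1 - (j : ℕ) / 2)) (by omega) (by omega),
          hTvz ((m - 1 - (i : ℕ) / 2) + ((j : ℕ) / 2 + 1)) (by omega) (by omega),
          hTvz ((m - 1 - (i : ℕ) / 2) + (m - 1 - (j : ℕ) / 2)) (by omega) (by omega)]
        ring
    · -- i in pair region, j not
      rw [hA1 i hi, hA2 i hi, hBC2 j hj, hBC3 j hj]
      by_cases hjeq : (j : ℕ) = 2 * r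
      · rw [hB1 j hj hjeq]
        rw [hTvz (((i : ℕ) / 2 + 1) + 0) (by omega) (by omega),
          hTvz ((m - 1 - (i : ℕ) / 2) + 0) (by omega) (by omega)]
        ring
      · have hm2 : m % 2 = 0 := by omega
        rw [hC1 j hj hjeq]
        rw [hTvz (((i : ℕ) / 2 + 1) + m / 2) (by omega) (by omega),
          hTvz ((m - 1 - (i : ℕ) / 2) + m / 2) (by omega) (by omega)]
        ring
    · -- j in pair region, i not
      rw [hA1 j hj, hA2 j hj, hBC2 i hi, hBC3 i hi]
      by_cases hieq : (i : ℕ) = 2 * r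
      · rw [hB1 i hi hieq]
        rw [hTvz (0 + ((j : ℕ) / 2 + 1)) (by omega) (by omega),
          hTvz (0 + (m - 1 - (j : ℕ) / 2)) (by omega) (by omega)]
        ring
      · have hm2 : m % 2 = 0 := by omega
        rw [hC1 i hi hieq]
        rw [hTvz (m / 2 + ((j : ℕ) / 2 + 1)) (by omega) (by omega),
          hTvz (m / 2 + (m - 1 - (j : ℕ) / 2)) (by omega) (by omega)]
        ring
    · -- neither in pair region
      rw [hBC2 i hi, hBC3 i hi, hBC2 j hj, hBC3 j hj]
      by_cases hieq : (i : ℕ) = 2 * r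
      · have hm2 : m % 2 = 0 := by omega
        rw [hB1 i hi hieq, hC1 j hj (by omega)]
        rw [hTvz (0 + m / 2) (by omega) (by omega)]
        ring
      · have hm2 : m % 2 = 0 := by omega
        have hjeq : (j : ℕ) = 2 * r := by omega
        rw [hC1 i hi hieq, hB1 j hj hjeq]
        rw [hTvz (m / 2 + 0) (by omega) (by omega)]
        ring
  -- weights are nonzero
  have hwne : ∀ i : Fin m, w i ≠ 0 := by
    intro i
    have him := i.isLt
    rcases Nat.even_or_odd m with hpar | hpar
    · rw [hw.2 hpar]
      beta_reduce
      split_ifs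
      · exact one_ne_zero
      · exact neg_ne_zero.mpr one_ne_zero
      · exact mul_ne_zero hu hmK
      · exact mul_ne_zero (mul_ne_zero (neg_ne_zero.mpr ha) hu) hmK
    · rw [hw.1 hpar]
      beta_reduce
      split_ifs
      · exact one_ne_zero
      · exact neg_ne_zero.mpr one_ne_zero
      · exact mul_ne_zero hu hmK
  -- symmetric
  have hsymm : B.IsSymm := by
    refine ⟨fun x y => ?_⟩
    rw [hB]
    simp only [LinearMap.smul_apply, Algebra.traceForm_apply, smul_eq_mul, RingHom.id_apply]
    rw [mul_comm x y]
  have hassoc : QuadraticMap.associated (R := K) B.toQuadraticMap = B :=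
    QuadraticMap.associated_left_inverse K hsymm.eq
  have horth : (QuadraticMap.associated (R := K) B.toQuadraticMap).IsOrthoᵢ v := by
    intro i j hij
    show QuadraticMap.associated (R := K) B.toQuadraticMap (v i) (v j) = 0
    rw [hassoc]
    exact horth0 i j hij
  have hli : LinearIndependent K v := by
    refine LinearMap.linearIndependent_of_isOrthoᵢ horth (fun i hiso => hwne i ?_)
    have hiso' : QuadraticMap.associated (R := K) B.toQuadraticMap (v i) (v i) = 0 := hiso
    rw [hassoc] at hiso'
    rw [← hQv i]
    exact hiso'
  have hfinrank : Module.finrank K (AdjoinRoot (X ^ m + C a : K[X])) = m := by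
    rw [(AdjoinRoot.powerBasis hfne).finrank, AdjoinRoot.powerBasis_dim, natDegree_X_pow_add_C]
  haveI : Nonempty (Fin m) := ⟨⟨0, hm⟩⟩
  set bv : Module.Basis (Fin m) K (AdjoinRoot (X ^ m + C a : K[X])) :=
    basisOfLinearIndependentOfCardEqFinrank hli (by rw [Fintype.card_fin, hfinrank]) with hbv
  have hbvc : ⇑bv = v := coe_basisOfLinearIndependentOfCardEqFinrank hli _
  have hkey : (LinearMap.BilinMap.toQuadraticMap B).basisRepr bv
      = QuadraticMap.weightedSumSquares K w := by
    rw [QuadraticMap.basisRepr_eq_of_iIsOrtho _ _ (by rw [hbvc]; exact horth)]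
    congr 1
    funext i
    rw [hbvc, LinearMap.BilinMap.toQuadraticMap_apply]
    exact hQv i
  have hiso := QuadraticMap.isometryEquivBasisRepr (LinearMap.BilinMap.toQuadraticMap B) bv
  rw [hkey] at hiso
  exact ⟨hiso⟩
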